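/- Applying the swaps of the parallel Knuth shuffle in any round order consistent with the dependence constraints yields the same final permutation as the sequential Knuth shuffle: if in each round a set of swaps (i, H[i]) is executed simultaneously such that the source and destination index sets of the executed swaps are pairwise disjoint, and a swap (i, H[i]) is executed only after every swap (j, H[j]) with j > i and {j, H[j]} ∩ {i, H[i]} ≠ ∅ has been executed, then the final array equals the result of executing swaps sequentially for i = n down to 1. -/

import Mathlib

/-- The swap performed for index `i` of the Knuth shuffle: the transposition of
positions `i` and `H i` (the identity when they coincide). -/
def swapOf {n : ℕ} (H : ∀ i : Fin n, Fin (i.1 + 1)) (i : Fin n) : Equiv.Perm (Fin n) :=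
  Equiv.swap i (Fin.castLE i.isLt (H i))

/-- The set of positions touched by the swap for index `i`: `{i, H i}`. -/
def touched {n : ℕ} (H : ∀ i : Fin n, Fin (i.1 + 1)) (i : Fin n) : Finset (Fin n) :=
  {i, Fin.castLE i.isLt (H i)}

/-- Swaps with disjoint touched sets commute. -/
lemma swapOf_commute_of_disjoint {n : ℕ} (H : ∀ i : Fin n, Fin (i.1 + 1)) {i j : Fin n}
    (h : Disjoint (touched H i) (touched H j)) : Commute (swapOf H i) (swapOf H j) := by
  apply Equiv.Perm.Disjoint.commute
  intro x
  by_cases hx : x ∈ touched H i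
  · right
    have hx' : x ∉ touched H j := fun hx' => (Finset.disjoint_left.mp h hx hx')
    simp only [touched, Finset.mem_insert, Finset.mem_singleton] at hx'
    push_neg at hx'
    exact Equiv.swap_apply_of_ne_of_ne hx'.1 hx'.2
  · left
    simp only [touched, Finset.mem_insert, Finset.mem_singleton] at hx
    push_neg at hx
    exact Equiv.swap_apply_of_ne_of_ne hx.1 hx.2

/-- If a list `l₁` is a permutation of a strictly descending list `l₂`, and whenever `a`
appears before `b` in `l₁` with `a < b` the images `f a`, `f b` commute, then the products
of the images agree. -/
lemma prod_map_eq_of_perm_sorted {M α : Type*} [Monoid M] [LinearOrder α] (f : α → M) :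
    ∀ (l₂ l₁ : List α), l₁.Perm l₂ → l₂.Pairwise (· > ·) →
      l₁.Pairwise (fun a b => a < b → Commute (f a) (f b)) →
      (l₁.map f).prod = (l₂.map f).prod := by
  intro l₂
  induction l₂ with
  | nil =>
    intro l₁ hperm _ _
    simp [hperm.eq_nil]
  | cons m t ih =>
    intro l₁ hperm hsort hcomm
    have hm : m ∈ l₁ := hperm.mem_iff.2 (by simp)
    obtain ⟨u, v, rfl⟩ := List.append_of_mem hm
    have hnodup : (u ++ m :: v).Nodup := hperm.nodup_iff.2 (hsort.imp fun h => ne_of_gt h)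
    -- every element of u commutes with f m
    have hcommu : ∀ x ∈ u.map f, Commute (f m) x := by
      intro x hx
      obtain ⟨a, ha, rfl⟩ := List.mem_map.1 hx
      have halt : a < m := by
        have ha2 : a ∈ m :: t := hperm.subset (by simp [ha])
        have hane : a ≠ m := by
          have := List.disjoint_of_nodup_append hnodup
          exact fun h => this ha (h ▸ (List.mem_cons_self (a := m) (l := v)))
        have hat : a ∈ t := (List.mem_cons.1 ha2).resolve_left hane
        exact (List.pairwise_cons.1 hsort).1 a hat
      have : Commute (f a) (f m) := by
        have hp := List.pairwise_append.1 hcomm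
        exact hp.2.2 a ha m ((List.mem_cons_self (a := m) (l := v))) halt
      exact this.symm
    have hstep : ((u ++ m :: v).map f).prod = f m * ((u ++ v).map f).prod := by
      have hc : Commute (f m) (u.map f).prod := Commute.list_prod_right _ _ hcommu
      simp only [List.map_append, List.map_cons, List.prod_append, List.prod_cons]
      rw [← mul_assoc, ← hc.eq, mul_assoc]
    rw [hstep]
    have hperm' : (u ++ v).Perm t := by
      have h1 : (u ++ m :: v).Perm (m :: (u ++ v)) := List.perm_middle
      exact (List.perm_cons m).1 (h1.symm.trans hperm)
    have hsub : (u ++ v).Sublist (u ++ m :: v) :=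
      (List.sublist_cons_self m v).append_left u
    have := ih (u ++ v) hperm' (List.pairwise_cons.1 hsort).2 (hcomm.sublist hsub)
    rw [this]
    simp

theorem parallel_knuth_shuffle_schedule_correct (n : ℕ)
    (H : ∀ i : Fin n, Fin (i.1 + 1)) (schedule : List (List (Fin n)))
    (hpart : schedule.flatten.Perm (List.finRange n))
    (hdisj : ∀ r ∈ schedule, r.Pairwise fun i j => Disjoint (touched H i) (touched H j))
    (hdep : ∀ r₁ r₂ : ℕ, r₁ ≤ r₂ → r₂ < schedule.length →
      ∀ i ∈ schedule.getD r₁ [], ∀ j ∈ schedule.getD r₂ [], i < j →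
        Disjoint (touched H i) (touched H j)) :
    schedule.flatten.foldl (fun A i => A * swapOf H i) 1 =
      ((List.finRange n).reverse).foldl (fun A i => A * swapOf H i) 1 := by
  have fold_eq : ∀ l : List (Fin n),
      l.foldl (fun A i => A * swapOf H i) 1 = (l.map (swapOf H)).prod := by
    intro l
    rw [List.prod_eq_foldl, List.foldl_map]
  rw [fold_eq, fold_eq]
  apply prod_map_eq_of_perm_sorted
  · exact hpart.trans (List.reverse_perm _).symm
  · exact List.pairwise_reverse.2 (List.pairwise_lt_finRange n)
  · -- pairwise commuting condition on the flatten
    rw [List.pairwise_flatten]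
    constructor
    · intro r hr
      exact (hdisj r hr).imp fun h => fun _ => swapOf_commute_of_disjoint H h
    · rw [List.pairwise_iff_getElem]
      intro p q hp hq hpq i hi j hj hij
      have := hdep p q (le_of_lt hpq) hq
      rw [List.getD_eq_getElem _ _ (lt_trans hpq hq), List.getD_eq_getElem _ _ hq] at this
      exact swapOf_commute_of_disjoint H (this i hi j hj hij)
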